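/- For each k ∈ {1,…,d}, the map φ_k : Γ ↦ ((Γ_{ik}+Γ_{jk}-Γ_{ij})/2)_{i,j≠k} is a bijection from the set of strictly conditionally negative definite symmetric matrices with zero diagonal and nonnegative entries onto the set of strictly positive definite (d-1)×(d-1) covariance matrices indexed by {1,…,d}\{k}, with inverse Σ^{(k)} ↦ 1·diag(Σ̃^{(k)})ᵀ + diag(Σ̃^{(k)})·1ᵀ - 2Σ̃^{(k)}, where Σ̃^{(k)} is Σ^{(k)} extended by a zero k-th row and column. -/

import Mathlib

open Matrix

/-- The map `φ_k : Γ ↦ ((Γ_{ik}+Γ_{jk}-Γ_{ij})/2)_{i,j ≠ k}`. -/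
noncomputable def phiMap {d : ℕ} (k : Fin d) (Γ : Matrix (Fin d) (Fin d) ℝ) :
    Matrix {x : Fin d // x ≠ k} {x : Fin d // x ≠ k} ℝ :=
  Matrix.of fun i j => (Γ i.1 k + Γ j.1 k - Γ i.1 j.1) / 2

/-- The extension `Σ̃^{(k)}` of `Σ^{(k)}` by a zero `k`-th row and column. -/
noncomputable def tildeExt {d : ℕ} {k : Fin d}
    (S : Matrix {x : Fin d // x ≠ k} {x : Fin d // x ≠ k} ℝ) :
    Matrix (Fin d) (Fin d) ℝ :=
  Matrix.of fun i j =>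
    if hi : i = k then 0 else if hj : j = k then 0 else S ⟨i, hi⟩ ⟨j, hj⟩

/-- The inverse map `ψ_k : Σ^{(k)} ↦ 1 diag(Σ̃^{(k)})ᵀ + diag(Σ̃^{(k)}) 1ᵀ - 2 Σ̃^{(k)}`. -/
noncomputable def psiMap {d : ℕ} (k : Fin d)
    (S : Matrix {x : Fin d // x ≠ k} {x : Fin d // x ≠ k} ℝ) :
    Matrix (Fin d) (Fin d) ℝ :=
  Matrix.of fun i j => tildeExt S i i + tildeExt S j j - 2 * tildeExt S i j

/-- The set `D_d` of strictly conditionally negative definite symmetric matrices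
with zero diagonal and nonnegative entries. -/
def scndSet (d : ℕ) : Set (Matrix (Fin d) (Fin d) ℝ) :=
  {Γ | Γ.IsSymm ∧ (∀ i, Γ i i = 0) ∧ (∀ i j, 0 ≤ Γ i j) ∧
    ∀ a : Fin d → ℝ, a ≠ 0 → ∑ i, a i = 0 → a ⬝ᵥ Γ.mulVec a < 0}

/-- The set `P^k_{d-1}` of strictly positive definite matrices indexed by `{1,…,d} \ {k}`. -/
def posDefSet (d : ℕ) (k : Fin d) :
    Set (Matrix {x : Fin d // x ≠ k} {x : Fin d // x ≠ k} ℝ) :=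
  {S | S.PosDef}

variable {d : ℕ} {k : Fin d}

lemma tildeExt_apply (S : Matrix {x : Fin d // x ≠ k} {x : Fin d // x ≠ k} ℝ)
    {i j : Fin d} (hi : i ≠ k) (hj : j ≠ k) : tildeExt S i j = S ⟨i, hi⟩ ⟨j, hj⟩ := by
  simp [tildeExt, hi, hj]

lemma tildeExt_left (S : Matrix {x : Fin d // x ≠ k} {x : Fin d // x ≠ k} ℝ)
    (j : Fin d) : tildeExt S k j = 0 := by simp [tildeExt]

lemma tildeExt_right (S : Matrix {x : Fin d // x ≠ k} {x : Fin d // x ≠ k} ℝ)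
    (i : Fin d) : tildeExt S i k = 0 := by
  by_cases hi : i = k <;> simp [tildeExt, hi]

lemma phi_psi (S : Matrix {x : Fin d // x ≠ k} {x : Fin d // x ≠ k} ℝ) :
    phiMap k (psiMap k S) = S := by
  ext i j
  simp only [phiMap, psiMap, Matrix.of_apply]
  rw [tildeExt_apply S i.2 i.2, tildeExt_apply S j.2 j.2, tildeExt_apply S i.2 j.2,
    tildeExt_right, tildeExt_right, tildeExt_right]
  ring

lemma psi_phi (Γ : Matrix (Fin d) (Fin d) ℝ) (hsym : ∀ i j, Γ i j = Γ j i)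
    (hdiag : ∀ i, Γ i i = 0) : psiMap k (phiMap k Γ) = Γ := by
  ext i j
  simp only [psiMap, Matrix.of_apply]
  by_cases hi : i = k
  · rw [hi]
    by_cases hj : j = k
    · rw [hj]; rw [tildeExt_left, hdiag]; ring
    · rw [tildeExt_left, tildeExt_left, tildeExt_apply _ hj hj]
      simp only [phiMap, Matrix.of_apply]
      rw [hdiag, hsym j k]
      ring
  · by_cases hj : j = k
    · rw [hj]
      rw [tildeExt_right, tildeExt_right, tildeExt_apply _ hi hi]
      simp only [phiMap, Matrix.of_apply]
      rw [hdiag]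
      ring
    · rw [tildeExt_apply _ hi hi, tildeExt_apply _ hj hj, tildeExt_apply _ hi hj]
      simp only [phiMap, Matrix.of_apply]
      rw [hdiag i, hdiag j]
      ring

variable {d : ℕ}

lemma sum_split (k : Fin d) (f : Fin d → ℝ) :
    ∑ i, f i = f k + ∑ i : {x : Fin d // x ≠ k}, f i.1 := by
  rw [Fintype.sum_eq_add_sum_compl k]
  congr 1
  exact (Finset.sum_subtype ({k}ᶜ) (fun x => by simp) f)

lemma quad_expand {n : Type*} [Fintype n] (M : Matrix n n ℝ) (a : n → ℝ) :
    a ⬝ᵥ M.mulVec a = ∑ i, ∑ j, a i * M i j * a j := by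
  simp only [dotProduct, mulVec, Finset.mul_sum, mul_assoc]

lemma sum2_split (k : Fin d) (f : Fin d → Fin d → ℝ) :
    ∑ i, ∑ j, f i j = f k k + (∑ j : {x : Fin d // x ≠ k}, f k j.1)
      + ((∑ i : {x : Fin d // x ≠ k}, f i.1 k)
      + ∑ i : {x : Fin d // x ≠ k}, ∑ j : {x : Fin d // x ≠ k}, f i.1 j.1) := by
  rw [sum_split k (fun i => ∑ j, f i j), sum_split k (f k)]
  congr 1
  rw [← Finset.sum_add_distrib]
  exact Finset.sum_congr rfl fun i _ => sum_split k (f i.1)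

lemma phi_posdef (k : Fin d) (Γ : Matrix (Fin d) (Fin d) ℝ)
    (hsym : ∀ i j, Γ i j = Γ j i) (hdiag : ∀ i, Γ i i = 0)
    (hneg : ∀ a : Fin d → ℝ, a ≠ 0 → ∑ i, a i = 0 → a ⬝ᵥ Γ.mulVec a < 0) :
    (phiMap k Γ).PosDef := by
  rw [posDef_iff_dotProduct_mulVec]
  constructor
  · show (phiMap k Γ)ᴴ = phiMap k Γ
    ext i j
    simp only [conjTranspose_apply, phiMap, Matrix.of_apply, star_trivial]
    rw [hsym j.1 i.1]
    ring
  · intro x hx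
    set a : Fin d → ℝ :=
      fun i => if h : i = k then -(∑ j : {x : Fin d // x ≠ k}, x j) else x ⟨i, h⟩ with ha
    have ha_k : a k = -(∑ j : {x : Fin d // x ≠ k}, x j) := by simp [ha]
    have ha_sub : ∀ i : {x : Fin d // x ≠ k}, a i.1 = x i := by
      intro i; simp [ha, i.2]
    have hsum : ∑ i, a i = 0 := by
      rw [sum_split k, ha_k]
      have h2 : ∑ i : {x : Fin d // x ≠ k}, a i.1 = ∑ j : {x : Fin d // x ≠ k}, x j :=
        Finset.sum_congr rfl fun i _ => ha_sub i
      rw [h2]; ring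
    have hane : a ≠ 0 := by
      intro h0
      apply hx
      funext i
      have h3 := congrFun h0 i.1
      rw [ha_sub] at h3
      exact h3
    have hlt := hneg a hane hsum
    have L : x ⬝ᵥ (phiMap k Γ).mulVec x = ∑ i : {x : Fin d // x ≠ k},
        ∑ j : {x : Fin d // x ≠ k},
        (x i * Γ i.1 k * x j + x i * Γ j.1 k * x j - x i * Γ i.1 j.1 * x j) / 2 := by
      rw [quad_expand]
      refine Finset.sum_congr rfl fun i _ => Finset.sum_congr rfl fun j _ => ?_
      simp only [phiMap, Matrix.of_apply]
      ring
    have R : a ⬝ᵥ Γ.mulVec a = ∑ i : {x : Fin d // x ≠ k},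
        ∑ j : {x : Fin d // x ≠ k},
        (-(x i * Γ j.1 k * x j) + (-(x i * Γ i.1 k * x j) + x i * Γ i.1 j.1 * x j)) := by
      rw [quad_expand, sum2_split k (fun i j => a i * Γ i j * a j)]
      have E0 : a k * Γ k k * a k = 0 := by rw [hdiag k]; ring
      have EA : (∑ j : {x : Fin d // x ≠ k}, a k * Γ k j.1 * a j.1)
          = ∑ i : {x : Fin d // x ≠ k}, ∑ j : {x : Fin d // x ≠ k},
            -(x i * Γ j.1 k * x j) := by
        rw [Finset.sum_comm]
        refine Finset.sum_congr rfl fun j _ => ?_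
        rw [ha_k, ha_sub j, hsym k j.1]
        calc -(∑ i : {x : Fin d // x ≠ k}, x i) * Γ j.1 k * x j
            = (∑ i : {x : Fin d // x ≠ k}, x i) * (-(Γ j.1 k * x j)) := by ring
          _ = ∑ i : {x : Fin d // x ≠ k}, x i * (-(Γ j.1 k * x j)) := Finset.sum_mul _ _ _
          _ = ∑ i : {x : Fin d // x ≠ k}, -(x i * Γ j.1 k * x j) :=
              Finset.sum_congr rfl fun i _ => by ring
      have EB : (∑ i : {x : Fin d // x ≠ k}, a i.1 * Γ i.1 k * a k)
          = ∑ i : {x : Fin d // x ≠ k}, ∑ j : {x : Fin d // x ≠ k},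
            -(x i * Γ i.1 k * x j) := by
        refine Finset.sum_congr rfl fun i _ => ?_
        rw [ha_k, ha_sub i]
        calc x i * Γ i.1 k * -(∑ j : {x : Fin d // x ≠ k}, x j)
            = (∑ j : {x : Fin d // x ≠ k}, x j) * (-(x i * Γ i.1 k)) := by ring
          _ = ∑ j : {x : Fin d // x ≠ k}, x j * (-(x i * Γ i.1 k)) := Finset.sum_mul _ _ _
          _ = ∑ j : {x : Fin d // x ≠ k}, -(x i * Γ i.1 k * x j) :=
              Finset.sum_congr rfl fun j _ => by ring
      have EC : (∑ i : {x : Fin d // x ≠ k}, ∑ j : {x : Fin d // x ≠ k},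
            a i.1 * Γ i.1 j.1 * a j.1)
          = ∑ i : {x : Fin d // x ≠ k}, ∑ j : {x : Fin d // x ≠ k},
            x i * Γ i.1 j.1 * x j :=
        Finset.sum_congr rfl fun i _ => Finset.sum_congr rfl fun j _ => by
          rw [ha_sub i, ha_sub j]
      rw [E0, EA, EB, EC, zero_add]
      rw [← Finset.sum_add_distrib, ← Finset.sum_add_distrib]
      refine Finset.sum_congr rfl fun i _ => ?_
      rw [← Finset.sum_add_distrib, ← Finset.sum_add_distrib]
    have key : x ⬝ᵥ (phiMap k Γ).mulVec x = -(1/2) * (a ⬝ᵥ Γ.mulVec a) := by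
      rw [L, R, Finset.mul_sum]
      refine Finset.sum_congr rfl fun i _ => ?_
      rw [Finset.mul_sum]
      exact Finset.sum_congr rfl fun j _ => by ring
    have hpos : 0 < x ⬝ᵥ (phiMap k Γ).mulVec x := by rw [key]; linarith
    simpa using hpos


lemma psi_mem (k : Fin d) (S : Matrix {x : Fin d // x ≠ k} {x : Fin d // x ≠ k} ℝ)
    (hS : S.PosDef) : psiMap k S ∈ scndSet d := by
  have hs : ∀ p q, S p q = S q p := fun p q => by
    conv_lhs => rw [← hS.1]
    simp [conjTranspose_apply]
  have hq : ∀ v : {x : Fin d // x ≠ k} → ℝ, v ≠ 0 → 0 < v ⬝ᵥ S.mulVec v := by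
    intro v hv
    have := hS.dotProduct_mulVec_pos hv
    simpa using this
  have hts : ∀ i j, tildeExt S i j = tildeExt S j i := by
    intro i j
    by_cases hi : i = k
    · rw [hi, tildeExt_left, tildeExt_right]
    · by_cases hj : j = k
      · rw [hj, tildeExt_left, tildeExt_right]
      · rw [tildeExt_apply _ hi hj, tildeExt_apply _ hj hi, hs]
  refine ⟨?_, ?_, ?_, ?_⟩
  · show (psiMap k S)ᵀ = psiMap k S
    ext i j
    simp only [transpose_apply, psiMap, Matrix.of_apply]
    rw [hts i j]
    ring
  · intro i
    simp only [psiMap, Matrix.of_apply]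
    ring
  · intro i j
    simp only [psiMap, Matrix.of_apply]
    have hdi : ∀ (p : {x : Fin d // x ≠ k}), 0 < S p p := by
      intro p
      have h1 := hq (Pi.single p 1) (by
        intro h0
        have h2 := congrFun h0 p
        simp at h2)
      have hqv : (Pi.single p (1:ℝ)) ⬝ᵥ S.mulVec (Pi.single p 1) = S p p := by
        simp [dotProduct, mulVec, Pi.single_apply]
      rwa [hqv] at h1
    by_cases hi : i = k
    · rw [hi, tildeExt_left, tildeExt_left]
      by_cases hj : j = k
      · rw [hj, tildeExt_right]; norm_num
      · rw [tildeExt_apply _ hj hj]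
        have := hdi ⟨j, hj⟩
        linarith
    · by_cases hj : j = k
      · rw [hj, tildeExt_right, tildeExt_right, tildeExt_apply _ hi hi]
        have := hdi ⟨i, hi⟩
        linarith
      · by_cases hij : i = j
        · rw [hij]
          have h00 : tildeExt S j j + tildeExt S j j - 2 * tildeExt S j j = 0 := by ring
          rw [h00]
        · rw [tildeExt_apply _ hi hi, tildeExt_apply _ hj hj, tildeExt_apply _ hi hj]
          set v : {x : Fin d // x ≠ k} → ℝ :=
            Pi.single ⟨i, hi⟩ 1 - Pi.single ⟨j, hj⟩ 1 with hv
          have hvne : v ≠ 0 := by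
            intro h0
            have h2 := congrFun h0 ⟨i, hi⟩
            simp [hv, Pi.single_apply, Subtype.ext_iff, hij] at h2
          have h3 := hq v hvne
          have hqv : v ⬝ᵥ S.mulVec v = S ⟨i, hi⟩ ⟨i, hi⟩ + S ⟨j, hj⟩ ⟨j, hj⟩
              - 2 * S ⟨i, hi⟩ ⟨j, hj⟩ := by
            simp only [hv, dotProduct, mulVec, Pi.sub_apply, Pi.single_apply,
              sub_mul, mul_sub, ite_mul, one_mul, zero_mul, mul_ite, mul_one, mul_zero,
              Finset.sum_sub_distrib, Finset.sum_ite_eq', Finset.mem_univ, if_true]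
            rw [hs ⟨j, hj⟩ ⟨i, hi⟩]
            ring
          rw [hqv] at h3
          linarith
  · intro a hane hsum
    set x : {x : Fin d // x ≠ k} → ℝ := fun i => a i.1 with hx
    have hxne : x ≠ 0 := by
      intro h0
      have hz : ∀ i : {x : Fin d // x ≠ k}, a i.1 = 0 := fun i => by
        simpa using congrFun h0 i
      apply hane
      funext i
      simp only [Pi.zero_apply]
      by_cases hi : i = k
      · have h1 : ∑ i, a i = a k + ∑ i : {x : Fin d // x ≠ k}, a i.1 := sum_split k a
        have h2 : ∑ i : {x : Fin d // x ≠ k}, a i.1 = 0 :=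
          Finset.sum_eq_zero fun i _ => hz i
        rw [hsum, h2] at h1
        rw [hi]; linarith
      · exact hz ⟨i, hi⟩
    have hpos := hq x hxne
    have key : a ⬝ᵥ (psiMap k S).mulVec a = -2 * (x ⬝ᵥ S.mulVec x) := by
      have E1 : (∑ i, ∑ j, a i * tildeExt S i i * a j) = 0 := by
        refine Finset.sum_eq_zero fun i _ => ?_
        calc ∑ j, a i * tildeExt S i i * a j
            = (a i * tildeExt S i i) * ∑ j, a j := by
              rw [Finset.mul_sum]
          _ = 0 := by rw [hsum, mul_zero]
      have E2 : (∑ i, ∑ j, a i * tildeExt S j j * a j) = 0 := by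
        rw [Finset.sum_comm]
        refine Finset.sum_eq_zero fun j _ => ?_
        calc ∑ i, a i * tildeExt S j j * a j
            = ∑ i, a i * (tildeExt S j j * a j) :=
              Finset.sum_congr rfl fun i _ => by ring
          _ = (∑ i, a i) * (tildeExt S j j * a j) := (Finset.sum_mul _ _ _).symm
          _ = 0 := by rw [hsum, zero_mul]
      have E3 : (∑ i, ∑ j, a i * tildeExt S i j * a j) = x ⬝ᵥ S.mulVec x := by
        rw [sum2_split k (fun i j => a i * tildeExt S i j * a j), quad_expand]
        simp only [tildeExt_left, tildeExt_right, mul_zero, zero_mul,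
          Finset.sum_const_zero, add_zero, zero_add]
        refine Finset.sum_congr rfl fun i _ => Finset.sum_congr rfl fun j _ => ?_
        rw [tildeExt_apply S i.2 j.2]
      calc a ⬝ᵥ (psiMap k S).mulVec a
          = ∑ i, ∑ j, (a i * tildeExt S i i * a j + a i * tildeExt S j j * a j
              - 2 * (a i * tildeExt S i j * a j)) := by
            rw [quad_expand]
            refine Finset.sum_congr rfl fun i _ => Finset.sum_congr rfl fun j _ => ?_
            simp only [psiMap, Matrix.of_apply]
            ring
        _ = (∑ i, ∑ j, a i * tildeExt S i i * a j)
              + (∑ i, ∑ j, a i * tildeExt S j j * a j)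
              - ∑ i, ∑ j, 2 * (a i * tildeExt S i j * a j) := by
            simp only [Finset.sum_sub_distrib, Finset.sum_add_distrib]
        _ = -2 * (x ⬝ᵥ S.mulVec x) := by
            rw [E1, E2]
            have h5 : (∑ i, ∑ j, 2 * (a i * tildeExt S i j * a j))
                = 2 * (x ⬝ᵥ S.mulVec x) := by
              rw [← E3, Finset.mul_sum]
              refine Finset.sum_congr rfl fun i _ => ?_
              rw [Finset.mul_sum]
            rw [h5]
            ring
    rw [key]
    linarith

/-- `φ_k` is a bijection from `D_d` onto `P^k_{d-1}` with inverse `ψ_k`. -/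
theorem phi_bijection (d : ℕ) (k : Fin d) :
    Set.BijOn (phiMap k) (scndSet d) (posDefSet d k) ∧
    (∀ Γ ∈ scndSet d, psiMap k (phiMap k Γ) = Γ) ∧
    (∀ S ∈ posDefSet d k, phiMap k (psiMap k S) = S) := by
  have hmem : ∀ Γ ∈ scndSet d, phiMap k Γ ∈ posDefSet d k := fun Γ hΓ =>
    phi_posdef k Γ (fun i j => (congrFun (congrFun hΓ.1 j) i : Γ i j = Γ j i))
      hΓ.2.1 hΓ.2.2.2
  have hleft : ∀ Γ ∈ scndSet d, psiMap k (phiMap k Γ) = Γ := fun Γ hΓ =>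
    psi_phi Γ (fun i j => (congrFun (congrFun hΓ.1 j) i : Γ i j = Γ j i)) hΓ.2.1
  have hright : ∀ S ∈ posDefSet d k, phiMap k (psiMap k S) = S := fun S _ => phi_psi S
  refine ⟨⟨hmem, ?_, ?_⟩, hleft, hright⟩
  · intro Γ1 h1 Γ2 h2 he
    rw [← hleft Γ1 h1, ← hleft Γ2 h2, he]
  · intro S hS
    exact ⟨psiMap k S, psi_mem k S hS, phi_psi S⟩
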